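/- Let β : ℝ → ℝ be continuous with compact support, and let β̂ be its Fourier transform. Then there exists a finite constant B such that Σ_{k∈ℤ} |β̂(ω − 2kπ)|² ≤ B² for all ω ∈ ℝ. In fact one may take B² = Σ_{n∈ℤ} |(β ⋆ β^∨)(n)|, where β^∨(t) = β(−t) and ⋆ denotes convolution. -/

import Mathlib

open scoped BigOperators Real
open Complex
open scoped FourierTransform Convolution ENNReal
open MeasureTheory AddCircle

lemma mod_shift (f : ℝ → ℂ) (ξ₀ ξ : ℝ) :
    𝓕 (fun t => Complex.exp ((-2 * π * ξ₀ * t : ℝ) * I) * f t) ξ = 𝓕 f (ξ + ξ₀) := by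
  rw [Real.fourier_real_eq_integral_exp_smul, Real.fourier_real_eq_integral_exp_smul]
  congr 1
  ext t
  rw [smul_eq_mul, smul_eq_mul, ← mul_assoc, ← Complex.exp_add]
  congr 2
  push_cast
  ring


lemma conv_fourier (β : ℝ → ℝ) (hcont : Continuous β) (hsupp : HasCompactSupport β) (ξ : ℝ) :
    𝓕 (fun t => ((∫ u : ℝ, β (t - u) * β (-u) : ℝ) : ℂ)) ξ
      = ((‖𝓕 (fun t => (β t : ℂ)) ξ‖ ^ 2 : ℝ) : ℂ) := by
  obtain ⟨R, hR0, hR⟩ := hsupp.isBounded.subset_closedBall_lt 0 0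
  rw [Real.closedBall_eq_Icc, zero_sub, zero_add] at hR
  have hβ0 : ∀ x : ℝ, x ∉ Set.Icc (-R) R → β x = 0 := fun x hx =>
    image_eq_zero_of_notMem_tsupport (fun h => hx (hR h))
  -- integrand on the product space
  set P : ℝ × ℝ → ℂ := fun p =>
    Complex.exp ((-2 * π * p.1 * ξ : ℝ) * I) * ((β (p.1 - p.2) * β (-p.2) : ℝ) : ℂ) with hP
  have hPcont : Continuous P := by fun_prop
  have hPsupp : HasCompactSupport P := by
    apply HasCompactSupport.intro (isCompact_Icc.prod isCompact_Icc :
      IsCompact ((Set.Icc (-(2*R)) (2*R)) ×ˢ (Set.Icc (-R) R)))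
    rintro ⟨t, u⟩ hp
    rw [Set.mem_prod, not_and_or] at hp
    have : β (t - u) * β (-u) = 0 := by
      rcases hp with h1 | h2
      · rcases Classical.em (u ∈ Set.Icc (-R) R) with hu | hu
        · rw [hβ0 (t - u), zero_mul]
          simp only [Set.mem_Icc, not_and_or, not_le] at h1 ⊢
          rcases h1 with h | h
          · obtain ⟨hu1, hu2⟩ := hu
            left; nlinarith
          · obtain ⟨hu1, hu2⟩ := hu
            right; nlinarith
        · rw [hβ0 (-u), mul_zero]
          simp only [Set.mem_Icc, not_and_or, not_le] at hu ⊢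
          rcases hu with h | h
          · right; linarith
          · left; linarith
      · rw [hβ0 (-u), mul_zero]
        simp only [Set.mem_Icc, not_and_or, not_le] at h2 ⊢
        rcases h2 with h | h
        · right; linarith
        · left; linarith
    simp only [hP]
    rw [this]
    simp
  have hPint : Integrable P := hPcont.integrable_of_hasCompactSupport hPsupp
  set A : ℂ := 𝓕 (fun t => (β t : ℂ)) ξ with hA
  have h1 : 𝓕 (fun t => ((∫ u : ℝ, β (t - u) * β (-u) : ℝ) : ℂ)) ξ
      = ∫ t : ℝ, ∫ u : ℝ, P (t, u) := by
    rw [Real.fourier_real_eq_integral_exp_smul]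
    congr 1
    ext t
    rw [smul_eq_mul]
    have : ((∫ u : ℝ, β (t - u) * β (-u) : ℝ) : ℂ)
        = ∫ u : ℝ, ((β (t - u) * β (-u) : ℝ) : ℂ) := integral_ofReal.symm
    rw [this, ← integral_const_mul]
  have h2 : (∫ t : ℝ, ∫ u : ℝ, P (t, u)) = ∫ u : ℝ, ∫ t : ℝ, P (t, u) := by
    apply integral_integral_swap
    exact (Measure.volume_eq_prod ℝ ℝ ▸ hPint)
  have h3 : ∀ u : ℝ, (∫ t : ℝ, P (t, u))
      = Complex.exp ((-2 * π * u * ξ : ℝ) * I) * A * ((β (-u) : ℝ) : ℂ) := by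
    intro u
    have e1 : (∫ t : ℝ, P (t, u))
        = (∫ t : ℝ, Complex.exp ((-2 * π * t * ξ : ℝ) * I) * ((β (t - u) : ℝ) : ℂ)) * ((β (-u) : ℝ) : ℂ) := by
      rw [← integral_mul_const]
      congr 1; ext t
      simp only [hP]; push_cast; ring
    have e2 : (∫ t : ℝ, Complex.exp ((-2 * π * t * ξ : ℝ) * I) * ((β (t - u) : ℝ) : ℂ))
        = Complex.exp ((-2 * π * u * ξ : ℝ) * I) * A := by
      rw [← integral_add_right_eq_self
        (fun t : ℝ => Complex.exp ((-2 * π * t * ξ : ℝ) * I) * ((β (t - u) : ℝ) : ℂ)) u]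
      have : ∀ x : ℝ, Complex.exp ((-2 * π * (x + u) * ξ : ℝ) * I) * ((β (x + u - u) : ℝ) : ℂ)
          = Complex.exp ((-2 * π * u * ξ : ℝ) * I)
            * (Complex.exp ((-2 * π * x * ξ : ℝ) * I) * ((β x : ℝ) : ℂ)) := by
        intro x
        rw [← mul_assoc, ← Complex.exp_add, add_sub_cancel_right]
        congr 2
        push_cast; ring
      simp only [this]
      rw [integral_const_mul, hA, Real.fourier_real_eq_integral_exp_smul]
      simp only [smul_eq_mul]
    rw [e1, e2]
  have h4 : (∫ u : ℝ, ∫ t : ℝ, P (t, u)) = A * (starRingEnd ℂ) A := by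
    simp only [h3]
    have : ∀ u : ℝ, Complex.exp ((-2 * π * u * ξ : ℝ) * I) * A * ((β (-u) : ℝ) : ℂ)
        = A * (Complex.exp ((-2 * π * u * ξ : ℝ) * I) * ((β (-u) : ℝ) : ℂ)) := fun u => by ring
    simp only [this]
    rw [integral_const_mul]
    congr 1
    have e3 : (∫ u : ℝ, Complex.exp ((-2 * π * u * ξ : ℝ) * I) * ((β (-u) : ℝ) : ℂ))
        = ∫ u : ℝ, Complex.exp ((2 * π * u * ξ : ℝ) * I) * ((β u : ℝ) : ℂ) := by
      rw [← integral_neg_eq_self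
        (fun u : ℝ => Complex.exp ((-2 * π * u * ξ : ℝ) * I) * ((β (-u) : ℝ) : ℂ))]
      congr 1; ext u
      rw [neg_neg]
      congr 2
      push_cast; ring
    rw [e3]
    conv_rhs => rw [hA, Real.fourier_real_eq_integral_exp_smul]
    rw [← integral_conj]
    congr 1; ext u
    rw [smul_eq_mul, map_mul, Complex.conj_ofReal]
    congr 1
    rw [← Complex.exp_conj]
    congr 1
    rw [map_mul, Complex.conj_ofReal, Complex.conj_I]
    push_cast; ring
  rw [h1, h2, h4, Complex.mul_conj]
  norm_cast
  rw [← Complex.sq_norm]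

lemma summable_sq (β : ℝ → ℝ) (hcont : Continuous β) (hsupp : HasCompactSupport β) (ξ₀ : ℝ) :
    Summable (fun k : ℤ => ‖𝓕 (fun t => (β t : ℂ)) (ξ₀ + (k : ℝ))‖ ^ 2) := by
  obtain ⟨R, hR0, hR⟩ := hsupp.isBounded.subset_closedBall_lt 0 0
  rw [Real.closedBall_eq_Icc, zero_sub, zero_add] at hR
  have hβ0 : ∀ x : ℝ, x ∉ Set.Icc (-R) R → β x = 0 := fun x hx =>
    image_eq_zero_of_notMem_tsupport (fun h => hx (hR h))
  set N : ℕ := ⌈R⌉₊ + 1 with hN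
  have hRN : R < (N : ℝ) := by
    have := Nat.le_ceil R
    push_cast [hN]
    linarith
  set T : ℝ := 2 * (N : ℝ) with hTdef
  have hT : 0 < T := by positivity
  haveI : Fact (0 < T) := ⟨hT⟩
  set a : ℝ := -(N : ℝ) with ha
  have hab : a + T = (N : ℝ) := by rw [ha, hTdef]; ring
  have hNpos : 0 < N := by
    have : (0 : ℝ) < (N : ℝ) := by linarith
    exact_mod_cast this
  have hNne : ((N : ℕ) : ℂ) ≠ 0 := by exact_mod_cast hNpos.ne'
  clear_value N
  set g : ℝ → ℂ := fun t => Complex.exp ((-2 * π * ξ₀ * t : ℝ) * I) * ((β t : ℝ) : ℂ) with hg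
  have hg0 : ∀ x : ℝ, x ∉ Set.Icc (-R) R → g x = 0 := by
    intro x hx; simp [hg, hβ0 x hx]
  have hga : g a = 0 := by
    apply hg0; simp only [Set.mem_Icc, not_and_or, not_le, ha]; left; linarith
  have hgb : g (a + T) = 0 := by
    apply hg0; rw [hab]; simp only [Set.mem_Icc, not_and_or, not_le]; right; linarith
  have hgcont : Continuous g := by fun_prop
  set F : AddCircle T → ℂ := AddCircle.liftIco T a g with hF
  have hFcont : Continuous F :=
    AddCircle.liftIco_continuous (by rw [hga, hgb]) hgcont.continuousOn
  have hFg : ∀ x ∈ Set.Ioc a (a + T), F ↑x = g x := by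
    intro x hx
    rcases eq_or_lt_of_le hx.2 with heq | hlt
    · rw [heq]
      have : ((a + T : ℝ) : AddCircle T) = (a : AddCircle T) := by
        rw [AddCircle.coe_add_period]
      rw [this, hF, AddCircle.liftIco_coe_apply ⟨le_refl a, by linarith⟩, hga, hgb]
    · exact AddCircle.liftIco_coe_apply ⟨hx.1.le, hlt⟩
  -- relation between Fourier coefficients of F and fourier integral of g
  have key : ∀ k : ℤ, fourierCoeff F ((2 * N : ℤ) * k) = (1 / T) • 𝓕 g (k : ℝ) := by
    intro k
    rw [fourierCoeff_eq_intervalIntegral F _ a]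
    congr 1
    rw [intervalIntegral.integral_of_le (by linarith : a ≤ a + T)]
    have step1 : ∫ x in Set.Ioc a (a + T), fourier (-((2 * N : ℤ) * k)) (↑x : AddCircle T) • F ↑x
        = ∫ x in Set.Ioc a (a + T), Complex.exp ((-2 * π * x * (k : ℝ) : ℝ) * I) * g x := by
      apply setIntegral_congr_fun measurableSet_Ioc
      intro x hx
      dsimp only
      rw [hFg x hx, fourier_coe_apply, smul_eq_mul]
      congr 1
      congr 1
      rw [hTdef]
      push_cast
      rw [div_eq_iff (by exact_mod_cast mul_ne_zero two_ne_zero hNne : (2 * (N : ℂ)) ≠ 0)]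
      ring
    rw [step1]
    rw [setIntegral_eq_integral_of_forall_compl_eq_zero]
    · rw [Real.fourier_real_eq_integral_exp_smul]
      simp only [smul_eq_mul]
    · intro x hx
      rw [hg0 x, mul_zero]
      simp only [Set.mem_Ioc, not_and_or, not_lt, not_le] at hx
      simp only [Set.mem_Icc, not_and_or, not_le]
      rcases hx with h | h
      · left; rw [ha] at h; linarith
      · right; rw [hab] at h; linarith
  -- Parseval summability
  set fC : C(AddCircle T, ℂ) := ⟨F, hFcont⟩ with hfC
  set fL := ContinuousMap.toLp (E := ℂ) 2 haarAddCircle ℂ fC with hfL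
  have hm : Memℓp (⇑(fourierBasis.repr fL)) 2 := lp.memℓp _
  have hs : Summable fun i : ℤ => ‖fourierBasis.repr fL i‖ ^ (2 : ℝ≥0∞).toReal :=
    hm.summable (by norm_num)
  have hs2 : Summable fun i : ℤ => ‖fourierCoeff F i‖ ^ 2 := by
    have he : ∀ i : ℤ, ‖fourierBasis.repr fL i‖ ^ (2 : ℝ≥0∞).toReal
        = ‖fourierCoeff F i‖ ^ 2 := by
      intro i
      rw [fourierBasis_repr, hfL, fourierCoeff_toLp, hfC]
      norm_num
    exact (funext he : _) ▸ hs
  -- transfer back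
  have hinj : Function.Injective (fun k : ℤ => (2 * N : ℤ) * k) :=
    mul_right_injective₀ (by positivity)
  have hs3 : Summable fun k : ℤ => T ^ 2 * ‖fourierCoeff F ((2 * N : ℤ) * k)‖ ^ 2 :=
    (hs2.comp_injective hinj).mul_left _
  refine hs3.congr fun k => ?_
  have := key k
  have hnorm : ‖𝓕 g (k : ℝ)‖ ^ 2 = T ^ 2 * ‖fourierCoeff F ((2 * N : ℤ) * k)‖ ^ 2 := by
    rw [this, norm_smul]
    rw [norm_div, norm_one, Real.norm_of_nonneg hT.le]
    field_simp
  rw [← hnorm]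
  congr 2
  rw [hg, mod_shift (fun t => ((β t : ℝ) : ℂ)) ξ₀ (k : ℝ)]
  rw [add_comm]

theorem upper_riesz_bound
    (β : ℝ → ℝ) (hcont : Continuous β) (hsupp : HasCompactSupport β)
    (βhat : ℝ → ℂ)
    (hβhat : ∀ ω : ℝ, βhat ω = ∫ t : ℝ, (β t : ℂ) * Complex.exp (-Complex.I * ω * t)) :
    ∀ ω : ℝ, ∑' k : ℤ, ‖βhat (ω - 2 * k * π)‖ ^ 2 ≤
      ∑' n : ℤ, |∫ u : ℝ, β ((n : ℝ) - u) * β (-u)| := by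
  intro ω
  set ξ₀ : ℝ := ω / (2 * π) with hξ₀
  set γ : ℝ → ℝ := fun t => ∫ u : ℝ, β (t - u) * β (-u) with hγ
  -- γ is a convolution, hence continuous with compact support
  have hγ_eq : γ = (fun u => β (-u)) ⋆[ContinuousLinearMap.mul ℝ ℝ] β := by
    funext x
    rw [hγ, convolution_def]
    simp only [ContinuousLinearMap.mul_apply']
    congr 1; funext u
    exact mul_comm _ _
  have hβneg_supp : HasCompactSupport (fun u : ℝ => β (-u)) := by
    have := hsupp.comp_homeomorph (Homeomorph.neg ℝ)
    exact this
  have hγcont : Continuous γ := by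
    rw [hγ_eq]
    exact hsupp.continuous_convolution_right (L := ContinuousLinearMap.mul ℝ ℝ)
      ((hcont.comp continuous_neg).locallyIntegrable) hcont
  have hγsupp : HasCompactSupport γ := by
    rw [hγ_eq]
    exact HasCompactSupport.convolution (L := ContinuousLinearMap.mul ℝ ℝ) hβneg_supp hsupp
  -- the modulated function
  set f : ℝ → ℂ := fun t => Complex.exp ((-2 * π * ξ₀ * t : ℝ) * I) * ((γ t : ℝ) : ℂ) with hf
  have hfcont : Continuous f := by fun_prop
  have hγ'supp : HasCompactSupport (fun t : ℝ => ((γ t : ℝ) : ℂ)) := by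
    exact (hγsupp.comp_left (g := fun r : ℝ => (r : ℂ)) (by norm_num) : _)
  have hfsupp : HasCompactSupport f := by
    rw [hf]
    exact hγ'supp.mul_left
  -- Fourier transform of f
  have hFf : ∀ ξ : ℝ, 𝓕 f ξ = ((‖𝓕 (fun t => (β t : ℂ)) (ξ + ξ₀)‖ ^ 2 : ℝ) : ℂ) := by
    intro ξ
    rw [hf, mod_shift (fun t => ((γ t : ℝ) : ℂ)) ξ₀ ξ, hγ]
    exact conv_fourier β hcont hsupp (ξ + ξ₀)
  -- summability hypotheses for Poisson summation
  have hsum2 : Summable (fun n : ℤ => ‖𝓕 (fun t => (β t : ℂ)) (ξ₀ + (n : ℝ))‖ ^ 2) :=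
    summable_sq β hcont hsupp ξ₀
  have h_sum : Summable fun n : ℤ => 𝓕 f (n : ℝ) := by
    have he : (fun n : ℤ => 𝓕 f (n : ℝ))
        = fun n : ℤ => ((‖𝓕 (fun t => (β t : ℂ)) (ξ₀ + (n : ℝ))‖ ^ 2 : ℝ) : ℂ) := by
      funext n; rw [hFf (n : ℝ), add_comm]
    rw [he, Complex.summable_ofReal]
    exact hsum2
  set fc : C(ℝ, ℂ) := ⟨f, hfcont⟩ with hfc
  obtain ⟨P, hP0, hP⟩ := hfsupp.isBounded.subset_closedBall_lt 0 0
  rw [Real.closedBall_eq_Icc, zero_sub, zero_add] at hP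
  have hf0 : ∀ x : ℝ, x ∉ Set.Icc (-P) P → f x = 0 := fun x hx =>
    image_eq_zero_of_notMem_tsupport (fun h => hx (hP h))
  have h_norm : ∀ K : TopologicalSpace.Compacts ℝ,
      Summable fun n : ℤ => ‖(fc.comp (ContinuousMap.addRight (n : ℝ))).restrict K‖ := by
    intro K
    obtain ⟨M, hM0, hM⟩ := K.isCompact.isBounded.subset_closedBall_lt 0 0
    rw [Real.closedBall_eq_Icc, zero_sub, zero_add] at hM
    apply summable_of_ne_finset_zero (s := Finset.Icc (-⌈M + P⌉) ⌈M + P⌉)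
    intro n hn
    rw [Finset.mem_Icc, not_and_or, not_le, not_le] at hn
    have hzero : (fc.comp (ContinuousMap.addRight (n : ℝ))).restrict K = 0 := by
      ext ⟨x, hx⟩
      simp only [ContinuousMap.restrict_apply, ContinuousMap.comp_apply,
        ContinuousMap.coe_addRight, ContinuousMap.zero_apply, hfc, ContinuousMap.coe_mk]
      apply hf0
      have hx' : x ∈ Set.Icc (-M) M := hM hx
      have hMP : (M : ℝ) + P ≤ |(⌈M + P⌉ : ℤ)| := by
        rw [_root_.abs_of_nonneg]
        · exact Int.le_ceil _
        · exact_mod_cast Int.ceil_nonneg (by positivity)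
      simp only [Set.mem_Icc, not_and_or, not_le]
      rcases hn with h | h
      · left
        have : (n : ℝ) < -⌈M + P⌉ := by exact_mod_cast h
        have h2 : (⌈M + P⌉ : ℝ) ≥ M + P := Int.le_ceil _
        have hx1 := hx'.1
        nlinarith [hx'.2]
      · right
        have : (⌈M + P⌉ : ℝ) < n := by exact_mod_cast h
        have h2 : (⌈M + P⌉ : ℝ) ≥ M + P := Int.le_ceil _
        have hx1 := hx'.1
        nlinarith
    rw [hzero, norm_zero]
  -- Poisson summation
  have poisson := Real.tsum_eq_tsum_fourier (f := fc) h_norm h_sum 0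
  simp only [zero_add] at poisson
  have hfour : ∀ n : ℤ, fourier n (((0 : ℝ) : UnitAddCircle)) = 1 := by
    intro n
    rw [show (((0 : ℝ)) : UnitAddCircle) = 0 from rfl]
    exact fourier_eval_zero n
  simp only [hfour, mul_one] at poisson
  have hfc_coe : ⇑fc = f := rfl
  rw [hfc_coe] at poisson
  -- identify each term of the LHS
  have hpoint : ∀ k : ℤ, βhat (ω - 2 * (k : ℝ) * π)
      = 𝓕 (fun t => (β t : ℂ)) (ξ₀ - (k : ℝ)) := by
    intro k
    rw [hβhat, Real.fourier_real_eq_integral_exp_smul]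
    congr 1; funext t
    rw [smul_eq_mul, mul_comm]
    congr 2
    have hπ : (π : ℂ) ≠ 0 := Complex.ofReal_ne_zero.mpr Real.pi_ne_zero
    rw [hξ₀]
    push_cast
    field_simp
  have hLHS : (∑' k : ℤ, ‖βhat (ω - 2 * (k : ℝ) * π)‖ ^ 2)
      = ∑' k : ℤ, ‖𝓕 (fun t => (β t : ℂ)) (ξ₀ + (k : ℝ))‖ ^ 2 := by
    have e1 : (fun k : ℤ => ‖βhat (ω - 2 * (k : ℝ) * π)‖ ^ 2)
        = fun k : ℤ => (fun m : ℤ => ‖𝓕 (fun t => (β t : ℂ)) (ξ₀ + (m : ℝ))‖ ^ 2)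
            ((Equiv.neg ℤ) k) := by
      funext k
      rw [hpoint k]
      simp only [Equiv.neg_apply]
      congr 3
      push_cast
      ring
    rw [e1]
    exact Equiv.tsum_eq (Equiv.neg ℤ)
      (fun m : ℤ => ‖𝓕 (fun t => (β t : ℂ)) (ξ₀ + (m : ℝ))‖ ^ 2)
  rw [hLHS]
  set S := ∑' k : ℤ, ‖𝓕 (fun t => (β t : ℂ)) (ξ₀ + (k : ℝ))‖ ^ 2 with hSdef
  have hS0 : 0 ≤ S := tsum_nonneg fun k => sq_nonneg _
  have hSC : (S : ℂ) = ∑' n : ℤ, f (n : ℝ) := by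
    rw [hSdef, Complex.ofReal_tsum]
    rw [poisson]
    congr 1; funext n
    rw [hFf (n : ℝ), add_comm]
  have hsumf : Summable fun n : ℤ => ‖f (n : ℝ)‖ := by
    apply summable_of_ne_finset_zero (s := Finset.Icc (-⌈P⌉) ⌈P⌉)
    intro n hn
    rw [Finset.mem_Icc, not_and_or, not_le, not_le] at hn
    have hz : f (n : ℝ) = 0 := by
      apply hf0
      simp only [Set.mem_Icc, not_and_or, not_le]
      have hc : P ≤ ((⌈P⌉ : ℤ) : ℝ) := Int.le_ceil P
      rcases hn with h | h
      · left
        have : (n : ℝ) < -((⌈P⌉ : ℤ) : ℝ) := by exact_mod_cast h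
        linarith
      · right
        have : ((⌈P⌉ : ℤ) : ℝ) < (n : ℝ) := by exact_mod_cast h
        linarith
    rw [hz, norm_zero]
  have hfn : ∀ n : ℤ, ‖f (n : ℝ)‖ = |γ ((n : ℤ) : ℝ)| := by
    intro n
    rw [hf]
    dsimp only
    rw [norm_mul, show ‖cexp ((( -2 * π * ξ₀ * ((n : ℤ) : ℝ) : ℝ) : ℂ) * I)‖ = 1 from
      Complex.norm_exp_ofReal_mul_I _, one_mul]
    exact Complex.norm_real _
  calc S = ‖(S : ℂ)‖ := by rw [Complex.norm_real]; exact (_root_.abs_of_nonneg hS0).symm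
    _ = ‖∑' n : ℤ, f (n : ℝ)‖ := by rw [hSC]
    _ ≤ ∑' n : ℤ, ‖f (n : ℝ)‖ := norm_tsum_le_tsum_norm hsumf
    _ = ∑' n : ℤ, |∫ u : ℝ, β ((n : ℝ) - u) * β (-u)| := tsum_congr hfn
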